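/- Let T̃ = {t_1 < … < t_z} be a uniformly random z-element subset of {1,…,T-1}, augmented with t_0 = 0 and t_{z+1} = T, and let G = max_{1 ≤ i ≤ z+1} (t_i − t_{i−1}) be the maximum gap. Then for every positive integer t, Pr[G ≥ t] ≤ T · exp(−z·t/T). -/

import Mathlib

open Finset

/-- The maximum gap of the points `S ∪ {0, T}`: for each point `a ∈ {0} ∪ S`, the distance
to the next larger point of `S ∪ {T}`, maximized over `a`. This is the maximum consecutive
difference of the sorted sequence `0 = t₀ < t₁ < ⋯ < t_z < t_{z+1} = T` when `S ⊆ {1,…,T-1}`. -/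
def maxGap (T : ℕ) (S : Finset ℕ) : ℕ :=
  (insert 0 S).sup fun a => (((insert T S).filter (fun b => a < b)).min.untopD T) - a

lemma choose_step (m n z : ℕ) (hz : 1 ≤ z) (hmn : m ≤ n) :
    Nat.choose (m - 1) z * n ≤ Nat.choose m z * (n - z) := by
  rcases Nat.lt_or_ge (m-1) z with h | h
  · simp [Nat.choose_eq_zero_of_lt h]
  · have hm1 : 1 ≤ m := by omega
    have key : Nat.choose (m-1) z * m = Nat.choose m z * (m - z) := by
      have h2 := Nat.choose_mul_succ_eq (m-1) z
      rw [Nat.sub_add_cancel hm1] at h2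
      exact h2
    have h2 : (m - z) * n ≤ (n - z) * m := by
      rw [Nat.sub_mul, Nat.sub_mul, mul_comm n m]
      exact Nat.sub_le_sub_left (Nat.mul_le_mul_left z hmn) (m*n)
    have h3 : Nat.choose (m-1) z * n * m ≤ Nat.choose m z * (n - z) * m := by
      calc Nat.choose (m-1) z * n * m = Nat.choose (m-1) z * m * n := by ring
        _ = Nat.choose m z * ((m-z) * n) := by rw [key]; ring
        _ ≤ Nat.choose m z * ((n-z) * m) := Nat.mul_le_mul_left _ h2
        _ = Nat.choose m z * (n - z) * m := by ring
    exact Nat.le_of_mul_le_mul_right h3 (by omega)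

lemma choose_pow (n z : ℕ) (hz : 1 ≤ z) :
    ∀ k, Nat.choose (n - k) z * n ^ k ≤ Nat.choose n z * (n - z) ^ k := by
  intro k
  induction k with
  | zero => simp
  | succ k ih =>
    have step := choose_step (n - k) n z hz (Nat.sub_le n k)
    have hnk : n - (k+1) = (n - k) - 1 := by omega
    calc Nat.choose (n - (k+1)) z * n ^ (k+1)
        = (Nat.choose ((n-k)-1) z * n) * n ^ k := by rw [hnk, pow_succ]; ring
      _ ≤ (Nat.choose (n-k) z * (n - z)) * n ^ k := Nat.mul_le_mul_right _ step
      _ = (Nat.choose (n-k) z * n ^ k) * (n - z) := by ring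
      _ ≤ (Nat.choose n z * (n - z) ^ k) * (n - z) := Nat.mul_le_mul_right _ ih
      _ = Nat.choose n z * (n - z) ^ (k+1) := by ring

lemma gap_witness (T t : ℕ) (ht : 1 ≤ t) (S : Finset ℕ) (hS : S ⊆ Finset.Icc 1 (T-1))
    (hT : 1 ≤ T) (h : t ≤ maxGap T S) :
    ∃ j, j + t ≤ T ∧ (j = 0 ∨ j ∈ S) ∧ ∀ x ∈ S, ¬(j < x ∧ x < j + t) := by
  unfold maxGap at h
  rw [Finset.le_sup_iff (show (0:ℕ) < t by omega)] at h
  obtain ⟨a, haS, hta⟩ := h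
  have haT : a < T := by
    rcases Finset.mem_insert.1 haS with rfl | h'
    · omega
    · have := hS h'
      simp only [Finset.mem_Icc] at this
      omega
  set M := (insert T S).filter (fun b => a < b) with hM
  have hTM : T ∈ M := Finset.mem_filter.2 ⟨Finset.mem_insert_self _ _, haT⟩
  have hne : M.Nonempty := ⟨T, hTM⟩
  have hmin : M.min = (M.min' hne : ℕ) := (Finset.coe_min' hne).symm
  have huntop : (M.min.untopD T) = M.min' hne := by rw [hmin]; rfl
  rw [huntop] at hta
  have hmM : M.min' hne ∈ M := Finset.min'_mem _ _
  have ham : a < M.min' hne := (Finset.mem_filter.1 hmM).2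
  have hmT : M.min' hne ≤ T := Finset.min'_le M T hTM
  refine ⟨a, by omega, ?_, ?_⟩
  · rcases Finset.mem_insert.1 haS with rfl | h'
    · exact Or.inl rfl
    · exact Or.inr h'
  · rintro x hx ⟨h1, h2⟩
    have hxM : x ∈ M := Finset.mem_filter.2 ⟨Finset.mem_insert_of_mem hx, h1⟩
    have := Finset.min'_le M x hxM
    omega

lemma count_bound (T z t : ℕ) (hT : 2 ≤ T) (hz : 1 ≤ z) (ht : 1 ≤ t) :
    (((Finset.Icc 1 (T-1)).powersetCard z).filter fun s => t ≤ maxGap T s).card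
      ≤ (z + 1) * Nat.choose (T - t) z := by
  classical
  set G := Finset.Icc 1 (T-1) with hG
  set P : ℕ → Finset ℕ → Prop := fun j s => (j = 0 ∨ j ∈ s) ∧ ∀ x ∈ s, ¬(j < x ∧ x < j + t) with hP
  have hsub : ((G.powersetCard z).filter fun s => t ≤ maxGap T s)
      ⊆ (Finset.range (T - t + 1)).biUnion (fun j => (G.powersetCard z).filter (P j)) := by
    intro S hS
    rw [Finset.mem_filter] at hS
    obtain ⟨hSm, hgap⟩ := hS
    have hSsub : S ⊆ G := (Finset.mem_powersetCard.1 hSm).1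
    obtain ⟨j, hj1, hj2, hj3⟩ := gap_witness T t ht S hSsub (by omega) hgap
    rw [Finset.mem_biUnion]
    exact ⟨j, Finset.mem_range.2 (by omega), Finset.mem_filter.2 ⟨hSm, hj2, hj3⟩⟩
  have hcard := le_trans (Finset.card_le_card hsub) (Finset.card_biUnion_le)
  have h0 : ((G.powersetCard z).filter (P 0)).card ≤ Nat.choose (T - t) z := by
    have hsub0 : (G.powersetCard z).filter (P 0) ⊆ (Finset.Icc t (T-1)).powersetCard z := by
      intro S hS
      rw [Finset.mem_filter] at hS
      obtain ⟨hSm, _, hblock⟩ := hS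
      rw [Finset.mem_powersetCard] at hSm ⊢
      refine ⟨fun x hx => ?_, hSm.2⟩
      have hxG := hSm.1 hx
      rw [hG, Finset.mem_Icc] at hxG
      have := hblock x hx
      rw [Finset.mem_Icc]
      omega
    calc ((G.powersetCard z).filter (P 0)).card ≤ ((Finset.Icc t (T-1)).powersetCard z).card :=
          Finset.card_le_card hsub0
      _ = Nat.choose (T - t) z := by
          rw [Finset.card_powersetCard, Nat.card_Icc]
          congr 1
          omega
  have hj : ∀ j, 1 ≤ j → j ≤ T - t →
      ((G.powersetCard z).filter (P j)).card ≤ Nat.choose (T - 1 - t) (z - 1) := by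
    intro j hj1 hj2
    have hjt : j + t ≤ T := by omega
    have hBsub : Finset.Icc j (j + t - 1) ⊆ G := by
      intro x hx
      rw [Finset.mem_Icc] at hx
      rw [hG, Finset.mem_Icc]
      omega
    have htarget : ((G \ Finset.Icc j (j + t - 1)).powersetCard (z-1)).card
        = Nat.choose (T - 1 - t) (z - 1) := by
      rw [Finset.card_powersetCard, Finset.card_sdiff_of_subset hBsub, hG, Nat.card_Icc, Nat.card_Icc]
      congr 1
      omega
    rw [← htarget]
    apply Finset.card_le_card_of_injOn (fun s => s.erase j)
    · intro s hs
      simp only [Finset.mem_coe, Finset.mem_filter] at hs ⊢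
      obtain ⟨hsm, hjs, hblock⟩ := hs
      rw [Finset.mem_powersetCard] at hsm
      have hjmem : j ∈ s := hjs.resolve_left (by omega)
      rw [Finset.mem_powersetCard]
      constructor
      · intro x hx
        have hxs := Finset.mem_of_mem_erase hx
        have hxj := Finset.ne_of_mem_erase hx
        rw [Finset.mem_sdiff]
        refine ⟨hsm.1 hxs, ?_⟩
        rw [Finset.mem_Icc]
        have := hblock x hxs
        omega
      · rw [Finset.card_erase_of_mem hjmem, hsm.2]
    · intro s1 hs1 s2 hs2 heq
      simp only [Finset.coe_filter, Set.mem_setOf_eq] at hs1 hs2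
      have hj1m : j ∈ s1 := hs1.2.1.resolve_left (by omega)
      have hj2m : j ∈ s2 := hs2.2.1.resolve_left (by omega)
      have heq' : s1.erase j = s2.erase j := heq
      rw [← Finset.insert_erase hj1m, ← Finset.insert_erase hj2m, heq']
  have hsum : ∑ j ∈ Finset.range (T - t + 1), ((G.powersetCard z).filter (P j)).card
      ≤ (z + 1) * Nat.choose (T - t) z := by
    rw [Finset.sum_range_succ']
    have h1 : ∑ i ∈ Finset.range (T - t), ((G.powersetCard z).filter (P (i+1))).card
        ≤ (T - t) * Nat.choose (T - 1 - t) (z - 1) := by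
      calc ∑ i ∈ Finset.range (T - t), ((G.powersetCard z).filter (P (i+1))).card
          ≤ ∑ _i ∈ Finset.range (T - t), Nat.choose (T - 1 - t) (z - 1) := by
            apply Finset.sum_le_sum
            intro i hi
            exact hj (i+1) (by omega) (by rw [Finset.mem_range] at hi; omega)
        _ = (T - t) * Nat.choose (T - 1 - t) (z - 1) := by
            rw [Finset.sum_const, Finset.card_range, smul_eq_mul]
    have h2 : (T - t) * Nat.choose (T - 1 - t) (z - 1) ≤ z * Nat.choose (T - t) z := by
      rcases Nat.eq_zero_or_pos (T - t) with h' | h'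
      · rw [h']; simp
      · have hrw : T - t = (T - t - 1) + 1 := by omega
        rw [hrw]
        have hid := Nat.add_one_mul_choose_eq (T - t - 1) (z - 1)
        have hz' : z - 1 + 1 = z := by omega
        simp only [Nat.succ_eq_add_one, hz'] at hid
        have hTt : T - 1 - t = T - t - 1 := by omega
        rw [hTt, hid, mul_comm]
    calc (∑ i ∈ Finset.range (T - t), ((G.powersetCard z).filter (P (i+1))).card)
          + ((G.powersetCard z).filter (P 0)).card
        ≤ z * Nat.choose (T - t) z + Nat.choose (T - t) z := Nat.add_le_add (le_trans h1 h2) h0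
      _ = (z + 1) * Nat.choose (T - t) z := by ring
  exact le_trans hcard hsum

lemma realA (x y : ℝ) (hy : 0 ≤ y) (hx1 : 1 ≤ x) :
    x - 1 - y ≤ (x - 1) * Real.exp (-(y/x)) := by
  have hx : (0:ℝ) < x := by linarith
  have e1 : 1 - y/x ≤ Real.exp (-(y/x)) := by
    have := Real.add_one_le_exp (-(y/x)); linarith
  have h2 : x - 1 - y ≤ (x - 1) * (1 - y/x) := by
    have h3 : (x - 1) * (1 - y/x) = x - 1 - y + y/x := by field_simp; ring
    have h4 : 0 ≤ y/x := div_nonneg hy hx.le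
    linarith
  calc x - 1 - y ≤ (x - 1) * (1 - y/x) := h2
    _ ≤ (x - 1) * Real.exp (-(y/x)) := by
        apply mul_le_mul_of_nonneg_left e1 (by linarith)

lemma realB (x y : ℝ) (h1 : 1 ≤ y) (h2 : 2*y + 1 ≤ x) :
    (y+1)*(x-1-y) ≤ x*(x-1)*Real.exp (-(2*y/x)) := by
  have hx : (0:ℝ) < x := by linarith
  have e1 : 1 - y/x ≤ Real.exp (-(y/x)) := by
    have := Real.add_one_le_exp (-(y/x)); linarith
  have h0 : 0 ≤ 1 - y/x := by
    rw [sub_nonneg, div_le_one hx]; linarith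
  have e2 : (1 - y/x)^2 ≤ Real.exp (-(y/x))^2 := by
    apply pow_le_pow_left₀ h0 e1
  have e3 : Real.exp (-(y/x))^2 = Real.exp (-(2*y/x)) := by
    rw [sq, ← Real.exp_add]; ring_nf
  have key : x * ((y+1)*(x-1-y)) ≤ (x-1)*(x-y)^2 := by
    nlinarith [sq_nonneg (x - 1 - 2*y), mul_nonneg (by linarith : (0:ℝ) ≤ y - 1) (by linarith : (0:ℝ) ≤ x - 1 - 2*y), sq_nonneg (x - 2*y), mul_nonneg (by linarith : (0:ℝ) ≤ y - 1) (by linarith : (0:ℝ) ≤ y - 1)]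
  have h5 : (x-1)*(x-y)^2 = x*(x*(x-1)*(1 - y/x)^2) := by field_simp
  rw [h5] at key
  have h6 : (y+1)*(x-1-y) ≤ x*(x-1)*(1 - y/x)^2 := (mul_le_mul_iff_right₀ hx).mp key
  calc (y+1)*(x-1-y) ≤ x*(x-1)*(1 - y/x)^2 := h6
    _ ≤ x*(x-1)*Real.exp (-(2*y/x)) := by
        rw [← e3]
        apply mul_le_mul_of_nonneg_left e2 (by nlinarith)

lemma realC (x y : ℝ) (h1 : 1 ≤ y) (h2 : x ≤ 2*y) (h3 : y ≤ x - 2) :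
    (y+1)*(x-1-y) ≤ x*(x-1)*Real.exp (-(2*y/x)) := by
  have hx : (0:ℝ) < x := by linarith
  have hx3 : (3:ℝ) ≤ x := by linarith
  have e1 : (3*x - 2*y)/x ≤ Real.exp (2*(x-y)/x) := by
    have := Real.add_one_le_exp (2*(x-y)/x)
    have h4 : 2*(x-y)/x + 1 = (3*x-2*y)/x := by field_simp; ring
    linarith
  have e2 : Real.exp (-(2*y/x)) = Real.exp (2*(x-y)/x) * Real.exp (-2) := by
    rw [← Real.exp_add]
    congr 1
    field_simp
    ring
  have he : Real.exp (2:ℝ) < 7.39 := by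
    have h := Real.exp_one_lt_d9
    calc Real.exp (2:ℝ) = Real.exp 1 * Real.exp 1 := by rw [← Real.exp_add]; norm_num
      _ < 2.7182818286 * 2.7182818286 := by nlinarith [Real.exp_pos (1:ℝ)]
      _ < 7.39 := by norm_num
  have hepos : (0:ℝ) < Real.exp (-2) := Real.exp_pos _
  have he2 : (1:ℝ)/7.39 ≤ Real.exp (-2) := by
    rw [Real.exp_neg, one_div]
    exact inv_anti₀ (Real.exp_pos 2) he.le
  have key2 : 7.39 * ((y+1)*(x-1-y)) ≤ (x-1)*(3*x-2*y) := by
    nlinarith [sq_nonneg (2.695*y - 1.695*x + 1.89), sq_nonneg (x - y - 5.4),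
      mul_nonneg (by linarith : (0:ℝ) ≤ 2*y - x) (by linarith : (0:ℝ) ≤ x - 2 - y)]
  have hQ : (0:ℝ) ≤ (x-1)*(3*x-2*y) := by nlinarith
  calc (y+1)*(x-1-y) ≤ (x-1)*(3*x-2*y) * (1/7.39) := by linarith
    _ ≤ (x-1)*(3*x-2*y) * Real.exp (-2) := mul_le_mul_of_nonneg_left he2 hQ
    _ = x*(x-1)*((3*x-2*y)/x) * Real.exp (-2) := by field_simp
    _ ≤ x*(x-1)*Real.exp (2*(x-y)/x) * Real.exp (-2) := by
        apply mul_le_mul_of_nonneg_right _ hepos.le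
        apply mul_le_mul_of_nonneg_left e1 (by nlinarith)
    _ = x*(x-1)*Real.exp (-(2*y/x)) := by rw [e2]; ring

theorem max_gap_tail_bound (T z t : ℕ) (hT : 2 ≤ T) (hz1 : 1 ≤ z) (hz2 : z ≤ T - 1)
    (ht : 1 ≤ t) :
    let 𝒮 := (Finset.Icc 1 (T - 1)).powersetCard z
    ((𝒮.filter fun s => t ≤ maxGap T s).card : ℝ) / (𝒮.card : ℝ)
      ≤ (T : ℝ) * Real.exp (-((z : ℝ) * (t : ℝ) / (T : ℝ))) := by
  intro 𝒮
  have h𝒮 : 𝒮 = (Finset.Icc 1 (T - 1)).powersetCard z := rfl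
  have hcard : 𝒮.card = Nat.choose (T-1) z := by
    rw [h𝒮, Finset.card_powersetCard, Nat.card_Icc, Nat.add_sub_cancel]
  have hchoosepos : 0 < Nat.choose (T-1) z := Nat.choose_pos hz2
  have hTpos : (0:ℝ) < (T:ℝ) := by exact_mod_cast (by omega : 0 < T)
  have hcardpos : (0:ℝ) < (𝒮.card : ℝ) := by
    rw [hcard]; exact_mod_cast hchoosepos
  have hzr : (z:ℝ) ≤ (T:ℝ) - 1 := by
    have : (z:ℝ) ≤ ((T-1:ℕ):ℝ) := by exact_mod_cast hz2
    rwa [Nat.cast_sub (by omega), Nat.cast_one] at this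
  rw [div_le_iff₀ hcardpos]
  rcases eq_or_lt_of_le ht with h1 | h2
  · -- t = 1
    have ht1 : (t:ℝ) = 1 := by exact_mod_cast h1.symm
    have hle : ((𝒮.filter fun s => t ≤ maxGap T s).card : ℝ) ≤ (𝒮.card : ℝ) := by
      exact_mod_cast Finset.card_le_card (Finset.filter_subset _ _)
    have hexp : (1:ℝ) ≤ (T:ℝ) * Real.exp (-((z:ℝ) * (t:ℝ) / (T:ℝ))) := by
      have harg : -(((T:ℝ)-1)/(T:ℝ)) ≤ -((z:ℝ) * (t:ℝ) / (T:ℝ)) := by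
        rw [ht1, mul_one, neg_le_neg_iff]
        exact (div_le_div_iff_of_pos_right hTpos).2 hzr
      have hm := Real.exp_le_exp.2 harg
      have hsplit : Real.exp (-(((T:ℝ)-1)/(T:ℝ))) = Real.exp (1/(T:ℝ)) * Real.exp (-1) := by
        rw [← Real.exp_add]
        congr 1
        field_simp
        ring
      have h1T : 1 + 1/(T:ℝ) ≤ Real.exp (1/(T:ℝ)) := by
        have := Real.add_one_le_exp (1/(T:ℝ)); linarith
      have hinv : (1:ℝ)/3 ≤ Real.exp (-1) := by
        rw [Real.exp_neg, one_div]
        apply inv_anti₀ (Real.exp_pos 1)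
        have := Real.exp_one_lt_d9
        linarith
      have hT2 : (2:ℝ) ≤ (T:ℝ) := by exact_mod_cast hT
      have hc : (1:ℝ) ≤ (T:ℝ) * ((1 + 1/(T:ℝ)) * (1/3)) := by
        have heq : (T:ℝ) * ((1 + 1/(T:ℝ)) * (1/3)) = ((T:ℝ) + 1)/3 := by field_simp
        rw [heq]
        linarith
      calc (1:ℝ) ≤ (T:ℝ) * ((1 + 1/(T:ℝ)) * (1/3)) := hc
        _ ≤ (T:ℝ) * (Real.exp (1/(T:ℝ)) * Real.exp (-1)) := by
            apply mul_le_mul_of_nonneg_left _ hTpos.le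
            apply mul_le_mul h1T hinv (by norm_num) (Real.exp_pos _).le
        _ = (T:ℝ) * Real.exp (-(((T:ℝ)-1)/(T:ℝ))) := by rw [hsplit]
        _ ≤ (T:ℝ) * Real.exp (-((z:ℝ) * (t:ℝ) / (T:ℝ))) := by
            apply mul_le_mul_of_nonneg_left hm hTpos.le
    calc ((𝒮.filter fun s => t ≤ maxGap T s).card : ℝ) ≤ (𝒮.card : ℝ) := hle
      _ = 1 * (𝒮.card : ℝ) := by ring
      _ ≤ ((T:ℝ) * Real.exp (-((z:ℝ) * (t:ℝ) / (T:ℝ)))) * (𝒮.card : ℝ) := by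
          apply mul_le_mul_of_nonneg_right hexp hcardpos.le
  · -- t ≥ 2
    have ht2 : 2 ≤ t := h2
    have hcount := count_bound T z t hT hz1 ht
    have hcountR : ((𝒮.filter fun s => t ≤ maxGap T s).card : ℝ)
        ≤ ((z:ℝ) + 1) * (Nat.choose (T - t) z : ℝ) := by
      rw [h𝒮]
      calc (((((Finset.Icc 1 (T - 1)).powersetCard z)).filter fun s => t ≤ maxGap T s).card : ℝ)
          ≤ (((z + 1) * Nat.choose (T - t) z : ℕ) : ℝ) := by exact_mod_cast hcount
        _ = ((z:ℝ) + 1) * (Nat.choose (T - t) z : ℝ) := by push_cast; ring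
    rcases (by omega : z = T - 1 ∨ z ≤ T - 2) with hzz | hzz
    · have hzero : Nat.choose (T - t) z = 0 := Nat.choose_eq_zero_of_lt (by omega)
      rw [hzero] at hcountR
      simp only [Nat.cast_zero, mul_zero] at hcountR
      have : (0:ℝ) ≤ ((T:ℝ) * Real.exp (-((z:ℝ) * (t:ℝ) / (T:ℝ)))) * (𝒮.card : ℝ) := by
        positivity
      linarith
    · -- main case
      set x : ℝ := (T:ℝ) with hx
      set y : ℝ := (z:ℝ) with hy
      have hy1 : (1:ℝ) ≤ y := by rw [hy]; exact_mod_cast hz1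
      have hyx2 : y ≤ x - 2 := by
        have h' : (z:ℝ) ≤ ((T-2:ℕ):ℝ) := by exact_mod_cast hzz
        rw [Nat.cast_sub (by omega)] at h'
        rw [hy, hx]
        exact_mod_cast h'
      have hx2 : (2:ℝ) ≤ x := by rw [hx]; exact_mod_cast hT
      have hn : (0:ℝ) < x - 1 := by linarith
      have hNcast : ((T-1:ℕ):ℝ) = x - 1 := by
        rw [Nat.cast_sub (by omega), Nat.cast_one]
      have hWcast : ((T-1-z:ℕ):ℝ) = x - 1 - y := by
        rw [Nat.cast_sub (by omega), hNcast]
      have natineq := choose_pow (T-1) z hz1 (t-1)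
      have hTt : T - 1 - (t-1) = T - t := by omega
      rw [hTt] at natineq
      have rineq : (Nat.choose (T-t) z : ℝ) * (x-1)^(t-1)
          ≤ (Nat.choose (T-1) z : ℝ) * (x-1-y)^(t-1) := by
        have hcast : ((Nat.choose (T-t) z : ℕ):ℝ) * (((T-1:ℕ):ℝ))^(t-1)
            ≤ ((Nat.choose (T-1) z : ℕ):ℝ) * (((T-1-z:ℕ):ℝ))^(t-1) := by
          exact_mod_cast natineq
        rwa [hNcast, hWcast] at hcast
      set r : ℝ := (x - 1 - y)/(x - 1) with hr
      have hw0 : (0:ℝ) ≤ x - 1 - y := by linarith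
      have hr0 : (0:ℝ) ≤ r := div_nonneg hw0 hn.le
      have hAB : (Nat.choose (T-t) z : ℝ) ≤ (Nat.choose (T-1) z : ℝ) * r^(t-1) := by
        have hrn : r * (x-1) = x - 1 - y := div_mul_cancel₀ _ hn.ne'
        have hpow : (x-1-y)^(t-1) = r^(t-1) * (x-1)^(t-1) := by
          rw [← mul_pow, hrn]
        rw [hpow, ← mul_assoc] at rineq
        exact le_of_mul_le_mul_right rineq (pow_pos hn (t-1))
      have hi : r ≤ Real.exp (-(y/x)) := by
        rw [hr, div_le_iff₀ hn]
        calc x - 1 - y ≤ (x-1) * Real.exp (-(y/x)) := realA x y (by linarith) (by linarith)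
          _ = Real.exp (-(y/x)) * (x-1) := by ring
      have hii : (y+1) * r ≤ x * Real.exp (-(2*y/x)) := by
        have hbc : (y+1)*(x-1-y) ≤ x*(x-1)*Real.exp (-(2*y/x)) := by
          rcases (by omega : 2*z < T ∨ T ≤ 2*z) with hc | hc
          · apply realB x y hy1
            have h' : ((2*z+1 : ℕ):ℝ) ≤ ((T:ℕ):ℝ) := Nat.cast_le.2 (by omega)
            push_cast at h'
            rw [hx, hy]
            linarith
          · apply realC x y hy1 _ hyx2
            have h' : ((T:ℕ):ℝ) ≤ ((2*z : ℕ):ℝ) := Nat.cast_le.2 hc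
            push_cast at h'
            rw [hx, hy]
            linarith
        rw [hr]
        rw [mul_div_assoc']
        rw [div_le_iff₀ hn]
        calc (y+1)*(x-1-y) ≤ x*(x-1)*Real.exp (-(2*y/x)) := hbc
          _ = x * Real.exp (-(2*y/x)) * (x-1) := by ring
      have hkey : (y+1) * r^(t-1) ≤ x * Real.exp (-(y * (t:ℝ) / x)) := by
        have htm : t - 1 = (t-2) + 1 := by omega
        rw [htm, pow_succ]
        have hc2 : ((t-2:ℕ):ℝ) = (t:ℝ) - 2 := by
          rw [Nat.cast_sub (by omega)]
          norm_num
        calc (y+1) * (r^(t-2) * r) = ((y+1) * r) * r^(t-2) := by ring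
          _ ≤ (x * Real.exp (-(2*y/x))) * (Real.exp (-(y/x)))^(t-2) := by
              apply mul_le_mul hii (pow_le_pow_left₀ hr0 hi _) (pow_nonneg hr0 _) (by positivity)
          _ = x * Real.exp (-(y * (t:ℝ) / x)) := by
              rw [← Real.exp_nat_mul, mul_assoc, ← Real.exp_add]
              congr 1
              rw [hc2]
              ring
      calc ((𝒮.filter fun s => t ≤ maxGap T s).card : ℝ)
          ≤ ((z:ℝ) + 1) * (Nat.choose (T - t) z : ℝ) := hcountR
        _ ≤ (y + 1) * ((Nat.choose (T-1) z : ℝ) * r^(t-1)) := by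
            apply mul_le_mul_of_nonneg_left hAB (by linarith)
        _ = (Nat.choose (T-1) z : ℝ) * ((y+1) * r^(t-1)) := by ring
        _ ≤ (Nat.choose (T-1) z : ℝ) * (x * Real.exp (-(y * (t:ℝ) / x))) := by
            apply mul_le_mul_of_nonneg_left hkey (by positivity)
        _ = ((T:ℝ) * Real.exp (-((z:ℝ) * (t:ℝ) / (T:ℝ)))) * (𝒮.card : ℝ) := by
            rw [hcard]
            ring
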